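/- Suppose n = p + q is even. Then for every element a of the Clifford algebra Cl = ℝ_{p,q} there exists a real number r (the scalar part of a) such that: (1) ∑_J e_J · a · e^J = algebraMap ℝ Cl (2^n · r), where the sum runs over all subsets J of Fin n; and (2) a − algebraMap ℝ Cl r lies in the ℝ-linear span of the set { e_I : I a nonempty finite subset of Fin n }. -/

import Mathlib

noncomputable section

/-- The weights of the quadratic form of signature `(p, q)`: `1` for the first `p`
coordinates and `-1` for the remaining ones. -/
def cliffordWeight (p : ℕ) {n : ℕ} (i : Fin n) : ℝ := if (i : ℕ) < p then 1 else -1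

/-- The quadratic form of signature `(p, q)` on `Fin (p + q) → ℝ`. -/
def cliffordQ (p q : ℕ) : QuadraticForm ℝ (Fin (p + q) → ℝ) :=
  QuadraticMap.weightedSumSquares ℝ (cliffordWeight p)

/-- The generator `e i` of the Clifford algebra `ℝ_{p,q}`. -/
def cliffordE (p q : ℕ) (i : Fin (p + q)) : CliffordAlgebra (cliffordQ p q) :=
  CliffordAlgebra.ι (cliffordQ p q) (Pi.single i 1)

/-- `e_J`: the product of the generators `e j` for `j ∈ J`, in increasing order. -/
def eLower (p q : ℕ) (J : Finset (Fin (p + q))) : CliffordAlgebra (cliffordQ p q) :=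
  ((J.sort (· ≤ ·)).map (cliffordE p q)).prod

/-- `e^J`: the product of the elements `w j • e j` for `j ∈ J`, in decreasing order. -/
def eUpper (p q : ℕ) (J : Finset (Fin (p + q))) : CliffordAlgebra (cliffordQ p q) :=
  ((J.sort (· ≤ ·)).reverse.map (fun j => cliffordWeight p j • cliffordE p q j)).prod

namespace ScalarAux

variable (p q : ℕ)

/-- Product of generators along a list. -/
def eProd (l : List (Fin (p + q))) : CliffordAlgebra (cliffordQ p q) :=
  (l.map (cliffordE p q)).prod

/-- Product of weighted generators along a list. -/
def eProdW (l : List (Fin (p + q))) : CliffordAlgebra (cliffordQ p q) :=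
  (l.map (fun j => cliffordWeight p j • cliffordE p q j)).prod

@[simp] lemma eProd_nil : eProd p q [] = 1 := rfl

@[simp] lemma eProd_cons (j : Fin (p + q)) (l : List (Fin (p + q))) :
    eProd p q (j :: l) = cliffordE p q j * eProd p q l := by
  simp [eProd]

lemma eProd_append (l m : List (Fin (p + q))) :
    eProd p q (l ++ m) = eProd p q l * eProd p q m := by
  simp [eProd]

lemma eProdW_append (l m : List (Fin (p + q))) :
    eProdW p q (l ++ m) = eProdW p q l * eProdW p q m := by
  simp [eProdW]

@[simp] lemma eProdW_singleton (j : Fin (p + q)) :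
    eProdW p q [j] = cliffordWeight p j • cliffordE p q j := by
  simp [eProdW]

lemma eLower_def (I : Finset (Fin (p + q))) : eLower p q I = eProd p q (I.sort (· ≤ ·)) := rfl

lemma eUpper_def (I : Finset (Fin (p + q))) :
    eUpper p q I = eProdW p q ((I.sort (· ≤ ·)).reverse) := rfl

lemma weight_sq (i : Fin (p + q)) : cliffordWeight p i * cliffordWeight p i = 1 := by
  unfold cliffordWeight; split <;> norm_num

lemma Q_single (i : Fin (p + q)) : cliffordQ p q (Pi.single i 1) = cliffordWeight p i := by
  simp [cliffordQ, Pi.single_apply]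

lemma e_sq (i : Fin (p + q)) :
    cliffordE p q i * cliffordE p q i
      = algebraMap ℝ (CliffordAlgebra (cliffordQ p q)) (cliffordWeight p i) := by
  rw [cliffordE, CliffordAlgebra.ι_sq_scalar, Q_single]

lemma isOrtho_single {i j : Fin (p + q)} (h : i ≠ j) :
    (cliffordQ p q).IsOrtho (Pi.single i 1) (Pi.single j 1) := by
  rw [QuadraticMap.isOrtho_def]
  simp only [cliffordQ, QuadraticMap.weightedSumSquares_apply, Pi.add_apply, Pi.single_apply,
    smul_eq_mul]
  rw [← Finset.sum_add_distrib]
  refine Finset.sum_congr rfl fun k _ => ?_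
  by_cases hk : k = i <;> by_cases hk' : k = j <;>
    simp_all

lemma anticomm {i j : Fin (p + q)} (h : i ≠ j) :
    cliffordE p q i * cliffordE p q j = -(cliffordE p q j * cliffordE p q i) :=
  CliffordAlgebra.ι_mul_ι_comm_of_isOrtho (isOrtho_single p q h)

lemma commute_list {i : Fin (p + q)} {l : List (Fin (p + q))} (h : i ∉ l) :
    cliffordE p q i * eProd p q l = ((-1 : ℝ) ^ l.length) • (eProd p q l * cliffordE p q i) := by
  induction l with
  | nil => simp
  | cons j t ih =>
    have hij : i ≠ j := fun hh => h (hh ▸ List.mem_cons_self)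
    have hit : i ∉ t := fun hh => h (List.mem_cons_of_mem _ hh)
    rw [eProd_cons, ← mul_assoc, anticomm p q hij, neg_mul, mul_assoc, ih hit,
      mul_smul_comm, ← mul_assoc, ← eProd_cons, ← neg_smul]
    congr 1
    rw [List.length_cons, pow_succ]
    ring

lemma commute_list' {i : Fin (p + q)} {l : List (Fin (p + q))} (h : i ∉ l) :
    eProd p q l * cliffordE p q i = ((-1 : ℝ) ^ l.length) • (cliffordE p q i * eProd p q l) := by
  rw [commute_list p q h, smul_smul, ← pow_add]
  rw [Even.neg_one_pow ⟨l.length, by ring⟩, one_smul]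

end ScalarAux

namespace ScalarAux

variable (p q : ℕ)

/-- The sign by which `e_I` gets multiplied when conjugated by `e j … w j • e j`. -/
def sgn (I : Finset (Fin (p + q))) (j : Fin (p + q)) : ℝ :=
  (-1 : ℝ) ^ I.card * (if j ∈ I then -1 else 1)

lemma conj_single (j : Fin (p + q)) (I : Finset (Fin (p + q))) :
    cliffordE p q j * eLower p q I * (cliffordWeight p j • cliffordE p q j)
      = sgn p q I j • eLower p q I := by
  have hcard : I.card = (I.sort (· ≤ ·)).length := (Finset.length_sort _).symm
  set E := cliffordE p q j with hE
  set w := cliffordWeight p j with hw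
  have hww : w * w = 1 := weight_sq p q j
  have hEE : E * E = algebraMap ℝ (CliffordAlgebra (cliffordQ p q)) w := e_sq p q j
  by_cases hj : j ∈ I
  · obtain ⟨s, t, hst⟩ := List.append_of_mem ((Finset.mem_sort (· ≤ ·)).2 hj)
    have hnd : (I.sort (· ≤ ·)).Nodup := Finset.sort_nodup _ _
    rw [hst] at hnd
    have hjt : j ∉ t := (List.nodup_cons.1 hnd.of_append_right).1
    have hjs : j ∉ s := fun hh =>
      (List.disjoint_of_nodup_append hnd) hh List.mem_cons_self
    set S := eProd p q s with hS
    set T := eProd p q t with hT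
    have hIL : eLower p q I = S * (E * T) := by
      rw [eLower_def, hst, eProd_append, eProd_cons]
    have h1 : E * (S * (E * T)) = ((-1 : ℝ) ^ s.length * w) • (S * T) := by
      calc E * (S * (E * T)) = (E * S) * (E * T) := by rw [mul_assoc]
        _ = ((-1 : ℝ) ^ s.length • (S * E)) * (E * T) := by rw [commute_list p q hjs]
        _ = (-1 : ℝ) ^ s.length • (S * ((E * E) * T)) := by
            rw [smul_mul_assoc, mul_assoc, mul_assoc]
        _ = (-1 : ℝ) ^ s.length • (S * ((w • (1 : CliffordAlgebra (cliffordQ p q))) * T)) := by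
            rw [hEE, Algebra.algebraMap_eq_smul_one]
        _ = ((-1 : ℝ) ^ s.length * w) • (S * T) := by
            rw [smul_mul_assoc, one_mul, mul_smul_comm, smul_smul]
    have h2 : (S * T) * (w • E) = ((-1 : ℝ) ^ t.length * w) • (S * (E * T)) := by
      calc (S * T) * (w • E) = w • (S * (T * E)) := by rw [mul_smul_comm, mul_assoc]
        _ = w • (S * ((-1 : ℝ) ^ t.length • (E * T))) := by rw [commute_list' p q hjt]
        _ = ((-1 : ℝ) ^ t.length * w) • (S * (E * T)) := by
            rw [mul_smul_comm, smul_smul, mul_comm]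
    rw [hIL, mul_assoc, ← mul_assoc E, h1, smul_mul_assoc, h2, smul_smul]
    congr 1
    have hlen : I.card = s.length + t.length + 1 := by
      rw [hcard, hst]; simp; omega
    rw [sgn, if_pos hj, hlen, pow_succ, pow_add]
    calc (-1 : ℝ) ^ s.length * w * ((-1 : ℝ) ^ t.length * w)
        = ((-1 : ℝ) ^ s.length * (-1 : ℝ) ^ t.length) * (w * w) := by ring
      _ = (-1 : ℝ) ^ s.length * (-1 : ℝ) ^ t.length * -1 * -1 := by rw [hww]; ring
  · have hj' : j ∉ I.sort (· ≤ ·) := fun hh => hj ((Finset.mem_sort _).1 hh)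
    have hE1 : E * (w • E) = 1 := by
      rw [mul_smul_comm, hEE, Algebra.algebraMap_eq_smul_one, smul_smul, hww, one_smul]
    rw [eLower_def, commute_list p q hj', smul_mul_assoc, mul_assoc, hE1, mul_one,
      sgn, if_neg hj, mul_one, ← eLower_def, hcard]

lemma conj_list (I : Finset (Fin (p + q))) (m : List (Fin (p + q))) :
    eProd p q m * eLower p q I * eProdW p q m.reverse
      = ((m.map (sgn p q I)).prod) • eLower p q I := by
  induction m with
  | nil => simp [eProdW]
  | cons j t ih =>
    rw [List.reverse_cons, eProdW_append, eProd_cons, eProdW_singleton]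
    calc cliffordE p q j * eProd p q t * eLower p q I *
          (eProdW p q t.reverse * (cliffordWeight p j • cliffordE p q j))
        = cliffordE p q j * (eProd p q t * eLower p q I * eProdW p q t.reverse) *
            (cliffordWeight p j • cliffordE p q j) := by
          simp only [mul_assoc]
      _ = cliffordE p q j * (((t.map (sgn p q I)).prod) • eLower p q I) *
            (cliffordWeight p j • cliffordE p q j) := by rw [ih]
      _ = ((t.map (sgn p q I)).prod) •
            (cliffordE p q j * eLower p q I * (cliffordWeight p j • cliffordE p q j)) := by
          simp only [mul_smul_comm, smul_mul_assoc]; rw [smul_comm]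
      _ = ((t.map (sgn p q I)).prod) • (sgn p q I j • eLower p q I) := by
          rw [conj_single]
      _ = (((j :: t).map (sgn p q I)).prod) • eLower p q I := by
          rw [smul_smul, List.map_cons, List.prod_cons, mul_comm]

lemma conj_finset (I J : Finset (Fin (p + q))) :
    eLower p q J * eLower p q I * eUpper p q J = (∏ j ∈ J, sgn p q I j) • eLower p q I := by
  rw [eLower_def p q J, eUpper_def, conj_list]
  congr 1
  rw [← Finset.prod_map_toList]
  exact List.Perm.prod_eq (List.Perm.map _ (Finset.sort_perm_toList _ _))

end ScalarAux

namespace ScalarAux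

variable (p q : ℕ)

lemma sum_prod_sgn (I : Finset (Fin (p + q))) :
    ∑ J : Finset (Fin (p + q)), ∏ j ∈ J, sgn p q I j
      = (1 - (-1 : ℝ) ^ I.card) ^ I.card * (1 + (-1 : ℝ) ^ I.card) ^ (p + q - I.card) := by
  have key : ∀ J : Finset (Fin (p + q)), (∏ j ∈ J, sgn p q I j)
      = (∏ j ∈ J, sgn p q I j) * ∏ j ∈ Finset.univ \ J, (1 : ℝ) := by
    intro J; simp
  calc ∑ J : Finset (Fin (p + q)), ∏ j ∈ J, sgn p q I j
      = ∑ J ∈ Finset.univ.powerset, (∏ j ∈ J, sgn p q I j) * ∏ j ∈ Finset.univ \ J, (1 : ℝ) := by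
        rw [Finset.powerset_univ]
        exact Finset.sum_congr rfl fun J _ => key J
    _ = ∏ j : Fin (p + q), (sgn p q I j + 1) := (Finset.prod_add _ _ _).symm
    _ = (∏ j ∈ I, (sgn p q I j + 1)) * ∏ j ∈ Iᶜ, (sgn p q I j + 1) :=
        (Finset.prod_mul_prod_compl _ _).symm
    _ = (1 - (-1 : ℝ) ^ I.card) ^ I.card * (1 + (-1 : ℝ) ^ I.card) ^ (p + q - I.card) := by
        rw [show ∏ j ∈ I, (sgn p q I j + 1) = ∏ _j ∈ I, (1 - (-1 : ℝ) ^ I.card) from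
          Finset.prod_congr rfl fun j hj => by rw [sgn, if_pos hj]; ring]
        rw [show ∏ j ∈ Iᶜ, (sgn p q I j + 1) = ∏ _j ∈ Iᶜ, (1 + (-1 : ℝ) ^ I.card) from
          Finset.prod_congr rfl fun j hj => by
            rw [sgn, if_neg (Finset.mem_compl.1 hj)]; ring]
        rw [Finset.prod_const, Finset.prod_const, Finset.card_compl]
        simp

lemma sum_prod_sgn_empty :
    ∑ J : Finset (Fin (p + q)), ∏ j ∈ J, sgn p q (∅ : Finset (Fin (p + q))) j
      = (2 : ℝ) ^ (p + q) := by
  rw [sum_prod_sgn]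
  norm_num

lemma sum_prod_sgn_ne (h : Even (p + q)) {I : Finset (Fin (p + q))} (hI : I ≠ ∅) :
    ∑ J : Finset (Fin (p + q)), ∏ j ∈ J, sgn p q I j = 0 := by
  rw [sum_prod_sgn]
  rcases Nat.even_or_odd I.card with he | ho
  · have h1 : (1 - (-1 : ℝ) ^ I.card) = 0 := by rw [he.neg_one_pow]; ring
    have h2 : I.card ≠ 0 := fun hh => hI (Finset.card_eq_zero.1 hh)
    rw [h1, zero_pow h2, zero_mul]
  · have h1 : (1 + (-1 : ℝ) ^ I.card) = 0 := by rw [ho.neg_one_pow]; ring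
    have h2 : p + q - I.card ≠ 0 := by
      have hle : I.card ≤ p + q := by
        simpa using Finset.card_le_card (Finset.subset_univ I)
      have : I.card ≠ p + q := fun hh => (Nat.not_even_iff_odd.2 (hh ▸ ho)) h
      omega
    rw [h1, zero_pow h2, mul_zero]

lemma conj_sum (h : Even (p + q)) (I : Finset (Fin (p + q))) :
    ∑ J : Finset (Fin (p + q)), eLower p q J * eLower p q I * eUpper p q J
      = (if I = ∅ then (2 : ℝ) ^ (p + q) else 0) • eLower p q I := by
  have : ∀ J : Finset (Fin (p + q)), eLower p q J * eLower p q I * eUpper p q J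
      = (∏ j ∈ J, sgn p q I j) • eLower p q I := fun J => conj_finset p q I J
  rw [Finset.sum_congr rfl fun J _ => this J, ← Finset.sum_smul]
  by_cases hI : I = ∅
  · subst hI; rw [if_pos rfl, sum_prod_sgn_empty]
  · rw [if_neg hI, sum_prod_sgn_ne p q h hI]

end ScalarAux

namespace ScalarAux

variable (p q : ℕ)

/-- The span of all `e_I`. -/
def Sfull : Submodule ℝ (CliffordAlgebra (cliffordQ p q)) :=
  Submodule.span ℝ (Set.range (eLower p q))

lemma eProd_mem {l : List (Fin (p + q))} (hl : l.Pairwise (· < ·)) :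
    eProd p q l ∈ Sfull p q := by
  have hnd : l.Nodup := hl.nodup
  have hle : l.Pairwise (· ≤ ·) := hl.imp le_of_lt
  have : eLower p q l.toFinset = eProd p q l := by
    rw [eLower_def, (List.toFinset_sort (· ≤ ·) hnd).2 hle]
  exact Submodule.subset_span ⟨l.toFinset, this⟩

lemma mul_single_eq (i : Fin (p + q)) :
    ∀ (l : List (Fin (p + q))), l.Pairwise (· < ·) →
    ∃ (c : ℝ) (t : List (Fin (p + q))), t.Pairwise (· < ·) ∧
      (∀ x ∈ t, x = i ∨ x ∈ l) ∧
      cliffordE p q i * eProd p q l = c • eProd p q t := by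
  intro l
  induction l with
  | nil =>
    intro _
    exact ⟨1, [i], List.pairwise_singleton _ i, by simp, by simp⟩
  | cons j t ih =>
    intro hl
    have hjt : ∀ x ∈ t, j < x := fun x hx => (List.pairwise_cons.1 hl).1 x hx
    have hts : t.Pairwise (· < ·) := (List.pairwise_cons.1 hl).2
    rcases lt_trichotomy i j with hij | hij | hij
    · refine ⟨1, i :: j :: t, ?_, ?_, by simp only [one_smul, eProd_cons]⟩
      · rw [List.pairwise_cons]
        exact ⟨fun x hx => by
          rcases List.mem_cons.1 hx with hh | hh
          · exact hh ▸ hij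
          · exact hij.trans (hjt x hh), hl⟩
      · intro x hx
        rcases List.mem_cons.1 hx with hh | hh
        · exact Or.inl hh
        · exact Or.inr hh
    · subst hij
      refine ⟨cliffordWeight p i, t, hts, fun x hx => Or.inr (List.mem_cons_of_mem _ hx), ?_⟩
      rw [eProd_cons, ← mul_assoc, e_sq, Algebra.algebraMap_eq_smul_one, smul_mul_assoc, one_mul]
    · obtain ⟨c, t', ht's, ht'mem, ht'eq⟩ := ih hts
      refine ⟨-c, j :: t', ?_, ?_, ?_⟩
      · rw [List.pairwise_cons]
        refine ⟨fun x hx => ?_, ht's⟩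
        rcases ht'mem x hx with hh | hh
        · exact hh ▸ hij
        · exact hjt x hh
      · intro x hx
        rcases List.mem_cons.1 hx with hh | hh
        · exact Or.inr (hh ▸ List.mem_cons_self)
        · rcases ht'mem x hh with h1 | h1
          · exact Or.inl h1
          · exact Or.inr (List.mem_cons_of_mem _ h1)
      · have hne : i ≠ j := ne_of_gt hij
        rw [eProd_cons, ← mul_assoc, anticomm p q hne, neg_mul, mul_assoc, ht'eq,
          eProd_cons, mul_smul_comm, neg_smul]

lemma mul_gen_mem {i : Fin (p + q)} {x : CliffordAlgebra (cliffordQ p q)}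
    (hx : x ∈ Sfull p q) : cliffordE p q i * x ∈ Sfull p q := by
  induction hx using Submodule.span_induction with
  | mem y hy =>
    obtain ⟨I, rfl⟩ := hy
    obtain ⟨c, t, hts, _, hteq⟩ := mul_single_eq p q i (I.sort (· ≤ ·)) (List.sortedLT_iff_pairwise.1 (Finset.sortedLT_sort I))
    rw [eLower_def, hteq]
    exact Submodule.smul_mem _ _ (eProd_mem p q hts)
  | zero => rw [mul_zero]; exact Submodule.zero_mem _
  | add y z _ _ hy hz => rw [mul_add]; exact Submodule.add_mem _ hy hz
  | smul c y _ hy => rw [mul_smul_comm]; exact Submodule.smul_mem _ _ hy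

lemma mul_eProd_mem (l : List (Fin (p + q))) {x : CliffordAlgebra (cliffordQ p q)}
    (hx : x ∈ Sfull p q) : eProd p q l * x ∈ Sfull p q := by
  induction l with
  | nil => simpa using hx
  | cons j t ih =>
    rw [eProd_cons, mul_assoc]
    exact mul_gen_mem p q ih

lemma Sfull_eq_top : Sfull p q = ⊤ := by
  rw [eq_top_iff]
  intro a ha
  clear ha
  induction a using CliffordAlgebra.induction with
  | algebraMap r =>
    rw [Algebra.algebraMap_eq_smul_one]
    refine Submodule.smul_mem _ _ (Submodule.subset_span ⟨∅, ?_⟩)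
    simp [eLower]
  | ι v =>
    have hv : v = ∑ i, v i • (Pi.single i (1 : ℝ) : Fin (p + q) → ℝ) := by
      ext k
      simp [Pi.single_apply]
    rw [hv, map_sum]
    refine Submodule.sum_mem _ fun i _ => ?_
    rw [map_smul]
    refine Submodule.smul_mem _ _ (Submodule.subset_span ⟨{i}, ?_⟩)
    simp [eLower, cliffordE]
  | mul a b ha hb =>
    induction ha using Submodule.span_induction with
    | mem y hy =>
      obtain ⟨I, rfl⟩ := hy
      rw [eLower_def]
      exact mul_eProd_mem p q _ hb
    | zero => rw [zero_mul]; exact Submodule.zero_mem _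
    | add y z _ _ hy hz => rw [add_mul]; exact Submodule.add_mem _ hy hz
    | smul c y _ hy => rw [smul_mul_assoc]; exact Submodule.smul_mem _ _ hy
  | add a b ha hb => exact Submodule.add_mem _ ha hb

end ScalarAux

open ScalarAux in
theorem scalar_part_even (p q : ℕ) (h : Even (p + q)) (a : CliffordAlgebra (cliffordQ p q)) :
    ∃ r : ℝ,
      (∑ J : Finset (Fin (p + q)), eLower p q J * a * eUpper p q J) =
        algebraMap ℝ (CliffordAlgebra (cliffordQ p q)) (2 ^ (p + q) * r) ∧
      a - algebraMap ℝ (CliffordAlgebra (cliffordQ p q)) r ∈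
        Submodule.span ℝ
          {x : CliffordAlgebra (cliffordQ p q) |
            ∃ I : Finset (Fin (p + q)), I.Nonempty ∧ x = eLower p q I} := by

  have ha : a ∈ Sfull p q := by rw [Sfull_eq_top]; trivial
  obtain ⟨c, hc⟩ := (Submodule.mem_span_range_iff_exists_fun ℝ).1 ha
  have hempty : eLower p q ∅ = 1 := by simp [eLower]
  refine ⟨c ∅, ?_, ?_⟩
  · calc ∑ J : Finset (Fin (p + q)), eLower p q J * a * eUpper p q J
        = ∑ J : Finset (Fin (p + q)), ∑ I : Finset (Fin (p + q)),
            c I • (eLower p q J * eLower p q I * eUpper p q J) := by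
          refine Finset.sum_congr rfl fun J _ => ?_
          rw [← hc, Finset.mul_sum, Finset.sum_mul]
          refine Finset.sum_congr rfl fun I _ => ?_
          simp only [mul_smul_comm, smul_mul_assoc]
      _ = ∑ I : Finset (Fin (p + q)),
            c I • (∑ J : Finset (Fin (p + q)), eLower p q J * eLower p q I * eUpper p q J) := by
          rw [Finset.sum_comm]
          simp [Finset.smul_sum]
      _ = ∑ I : Finset (Fin (p + q)),
            c I • ((if I = ∅ then (2 : ℝ) ^ (p + q) else 0) • eLower p q I) := by
          refine Finset.sum_congr rfl fun I _ => ?_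
          rw [conj_sum p q h]
      _ = c ∅ • (((2 : ℝ) ^ (p + q)) • eLower p q ∅) := by
          rw [Finset.sum_eq_single ∅]
          · rw [if_pos rfl]
          · intro I _ hI
            rw [if_neg hI, zero_smul, smul_zero]
          · intro hh
            exact absurd (Finset.mem_univ ∅) hh
      _ = algebraMap ℝ (CliffordAlgebra (cliffordQ p q)) (2 ^ (p + q) * c ∅) := by
          rw [hempty, smul_smul, Algebra.algebraMap_eq_smul_one, mul_comm]
  · have hsplit : a - algebraMap ℝ (CliffordAlgebra (cliffordQ p q)) (c ∅)
        = ∑ I ∈ Finset.univ.erase ∅, c I • eLower p q I := by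
      rw [Algebra.algebraMap_eq_smul_one, ← hempty, ← hc,
        ← Finset.add_sum_erase _ _ (Finset.mem_univ ∅), add_sub_cancel_left]
    rw [hsplit]
    refine Submodule.sum_mem _ fun I hI => Submodule.smul_mem _ _ (Submodule.subset_span ?_)
    exact ⟨I, Finset.nonempty_of_ne_empty (Finset.ne_of_mem_erase hI), rfl⟩
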